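/- For any spanning tree $s$ of the $n \times n$ eight-neighbor grid rooted at a corner outlet, with unit link lengths, the energy $H_1(s) = \sum_{x \ne \text{outlet}} A_x$ satisfies $H_1(s) \ge \frac{4n^3 - 3n^2 - n}{6}$, where $A_x$ is the subtree size at $x$. -/

import Mathlib

/-- The king-move (eight-neighbor) graph on `{0, …, n-1}²`: distinct vertices are
adjacent iff they differ by at most 1 in each coordinate. -/
def kingGraph (n : ℕ) : SimpleGraph (Fin n × Fin n) where
  Adj x y := x ≠ y ∧ ((x.1 : ℤ) - (y.1 : ℤ)).natAbs ≤ 1 ∧ ((x.2 : ℤ) - (y.2 : ℤ)).natAbs ≤ 1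
  symm := ⟨by
    rintro x y ⟨h1, h2, h3⟩
    exact ⟨h1.symm, by omega, by omega⟩⟩
  loopless := ⟨by rintro x ⟨h, -⟩; exact h rfl⟩

lemma sum_max_int : ∀ n : ℕ, (∑ i ∈ Finset.range n, ∑ j ∈ Finset.range n, ((max i j : ℕ) : ℤ)) * 6 = 4*(n:ℤ)^3 - 3*(n:ℤ)^2 - n := by
  intro n
  induction n with
  | zero => simp
  | succ n ih =>
    rw [Finset.sum_range_succ]
    have h1 : ∀ i ∈ Finset.range n, ∑ j ∈ Finset.range (n+1), ((max i j : ℕ) : ℤ)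
        = (∑ j ∈ Finset.range n, ((max i j : ℕ) : ℤ)) + n := by
      intro i hi
      simp only [Finset.mem_range] at hi
      rw [Finset.sum_range_succ]
      have : max i n = n := by omega
      rw [this]
    rw [Finset.sum_congr rfl h1, Finset.sum_add_distrib]
    have h2 : ∑ j ∈ Finset.range (n+1), ((max n j : ℕ) : ℤ) = (n+1)*(n:ℤ) := by
      have e : ∀ j ∈ Finset.range (n+1), ((max n j : ℕ) : ℤ) = (n : ℤ) := by
        intro j hj
        simp only [Finset.mem_range] at hj
        have : max n j = n := by omega
        rw [this]
      rw [Finset.sum_congr rfl e, Finset.sum_const, Finset.card_range, nsmul_eq_mul]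
      push_cast; ring
    rw [h2, Finset.sum_const, Finset.card_range, nsmul_eq_mul]
    push_cast at ih ⊢
    linarith [ih]

open scoped Classical in
/-- For any spanning tree of the `n × n` eight-neighbor grid rooted at a corner
outlet, with unit link lengths, the energy `H₁(s) = ∑_{x ≠ outlet} A_x` is at
least `(4n³ - 3n² - n)/6`, where `A_x` is the subtree size at `x`. -/
theorem stmt_14 (n : ℕ) (hn : 0 < n)
    (parent : Fin n × Fin n → Fin n × Fin n)
    (root : Fin n × Fin n) (hrootdef : root = (⟨0, hn⟩, ⟨0, hn⟩))
    (hroot : parent root = root)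
    (hadj : ∀ v : Fin n × Fin n, v ≠ root → (kingGraph n).Adj (parent v) v)
    (hreach : ∀ v : Fin n × Fin n, ∃ m : ℕ, parent^[m] v = root)
    (A : Fin n × Fin n → ℕ)
    (hA : ∀ x : Fin n × Fin n,
      A x = (Finset.univ.filter fun y : Fin n × Fin n => ∃ m : ℕ, parent^[m] y = x).card) :
    ((∑ x ∈ Finset.univ.filter (fun v : Fin n × Fin n => v ≠ root), A x : ℕ) : ℝ)
      ≥ (4 * (n : ℝ) ^ 3 - 3 * (n : ℝ) ^ 2 - (n : ℝ)) / 6 := by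
  classical
  have coord : ∀ (m : ℕ) (y : Fin n × Fin n),
      ((y.1 : ℤ) - ((parent^[m] y).1 : ℤ)).natAbs ≤ m ∧
      ((y.2 : ℤ) - ((parent^[m] y).2 : ℤ)).natAbs ≤ m := by
    intro m
    induction m with
    | zero => intro y; simp
    | succ m ih =>
      intro y
      rw [Function.iterate_succ_apply']
      obtain ⟨h1, h2⟩ := ih y
      set v := parent^[m] y with hv
      by_cases hvr : v = root
      · have hpv : parent v = v := by rw [hvr]; exact hroot
        rw [hpv]
        omega
      · obtain ⟨-, ha1, ha2⟩ := hadj v hvr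
        omega
  have hdepth : ∀ y : Fin n × Fin n, max y.1.val y.2.val ≤ Nat.find (hreach y) := by
    intro y
    set d := Nat.find (hreach y) with hd
    have hspec : parent^[d] y = root := Nat.find_spec (hreach y)
    obtain ⟨h1, h2⟩ := coord d y
    rw [hspec, hrootdef] at h1 h2
    simp only at h1 h2
    omega
  have hcard : ∀ y : Fin n × Fin n, Nat.find (hreach y) ≤
      (Finset.univ.filter fun x : Fin n × Fin n => x ≠ root ∧ ∃ m : ℕ, parent^[m] y = x).card := by
    intro y
    set d := Nat.find (hreach y) with hd
    have hspec : parent^[d] y = root := Nat.find_spec (hreach y)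
    have key : ∀ i j : ℕ, j < d → i < j → parent^[i] y = parent^[j] y → False := by
      intro i j hj hlt hij
      have h : parent^[(d - j) + i] y = root := by
        rw [Function.iterate_add_apply, hij, ← Function.iterate_add_apply]
        have e : d - j + j = d := by omega
        rw [e, hspec]
      exact Nat.find_min (hreach y) (show d - j + i < d by omega) h
    have hle := Finset.card_le_card_of_injOn (f := fun m => parent^[m] y)
      (s := Finset.range d)
      (t := Finset.univ.filter fun x : Fin n × Fin n => x ≠ root ∧ ∃ m : ℕ, parent^[m] y = x)
      (fun m hm => by
        simp only [Finset.mem_coe, Finset.mem_range] at hm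
        simp only [Finset.mem_coe, Finset.mem_filter, Finset.mem_univ, true_and]
        exact ⟨Nat.find_min (hreach y) hm, m, rfl⟩)
      (by
        intro i hi j hj hij
        simp only [Finset.coe_range, Set.mem_Iio] at hi hj
        have hij' : parent^[i] y = parent^[j] y := hij
        rcases Nat.lt_trichotomy i j with h | h | h
        · exact absurd hij' (fun e => key i j hj h e)
        · exact h
        · exact absurd hij'.symm (fun e => key j i hi h e))
    simpa using hle
  have hswap : (∑ x ∈ Finset.univ.filter (fun v : Fin n × Fin n => v ≠ root), A x)
      = ∑ y : Fin n × Fin n,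
        (Finset.univ.filter fun x : Fin n × Fin n => x ≠ root ∧ ∃ m : ℕ, parent^[m] y = x).card := by
    simp only [hA, Finset.card_filter]
    rw [Finset.sum_filter]
    have e1 : ∀ x : Fin n × Fin n,
        (if x ≠ root then ∑ y : Fin n × Fin n, if ∃ m : ℕ, parent^[m] y = x then 1 else 0 else 0)
        = ∑ y : Fin n × Fin n, if x ≠ root ∧ ∃ m : ℕ, parent^[m] y = x then (1 : ℕ) else 0 := by
      intro x
      split_ifs with h
      · exact Finset.sum_congr rfl fun y _ => by simp [h]
      · simp [h]
    rw [Finset.sum_congr rfl (fun x _ => e1 x), Finset.sum_comm]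
  have hS : (∑ y : Fin n × Fin n, max y.1.val y.2.val)
      = ∑ i ∈ Finset.range n, ∑ j ∈ Finset.range n, max i j := by
    rw [Fintype.sum_prod_type]
    rw [Fin.sum_univ_eq_sum_range (fun i => ∑ b : Fin n, max i b.val)]
    exact Finset.sum_congr rfl fun i _ => Fin.sum_univ_eq_sum_range (fun j => max i j) n
  have hmain : (∑ i ∈ Finset.range n, ∑ j ∈ Finset.range n, max i j)
      ≤ ∑ x ∈ Finset.univ.filter (fun v : Fin n × Fin n => v ≠ root), A x := by
    rw [hswap, ← hS]
    exact Finset.sum_le_sum fun y _ => le_trans (hdepth y) (hcard y)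
  have hval : ((∑ i ∈ Finset.range n, ∑ j ∈ Finset.range n, max i j : ℕ) : ℝ) * 6
      = 4 * (n : ℝ) ^ 3 - 3 * (n : ℝ) ^ 2 - (n : ℝ) := by
    have h0 := sum_max_int n
    have h2 := congrArg (fun z : ℤ => (z : ℝ)) h0
    push_cast at h2 ⊢
    convert h2 using 2
  have hcast : ((∑ i ∈ Finset.range n, ∑ j ∈ Finset.range n, max i j : ℕ) : ℝ)
      ≤ ((∑ x ∈ Finset.univ.filter (fun v : Fin n × Fin n => v ≠ root), A x : ℕ) : ℝ) := by
    exact_mod_cast hmain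
  linarith [hcast, hval]
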